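/- Let p > 3 be a prime, φ the quadratic character of F_p^×, and for a multiplicative character χ define the Jacobi-sum quotient Q(χ) = g(χ⁴)·g(χ⁻¹)·g(χ⁻⁶) / (g(χ²)·g(χ⁻²)·g(χ⁻³)) using Gauss sums g over F_p with respect to a fixed nontrivial additive character (interpreting each factor via Gauss sums with the convention χ(0)=0). Then (p/(1−p))·Σ_χ Q(χ)·χ(27/4) = (2/p), the Legendre symbol of 2 modulo p. -/

import Mathlib

open Finset

namespace Stmt19

variable {p : ℕ} [Fact p.Prime]

/-- The complex-valued quadratic character mod `p`. -/
noncomputable def qc (p : ℕ) [Fact p.Prime] : MulChar (ZMod p) ℂ :=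
  (quadraticChar (ZMod p)).ringHomComp (Int.castRingHom ℂ)

section basic

lemma nat_ne_zero (hp : 3 < p) {m : ℕ} (h0 : 0 < m) (hmp : m < p) : (m : ZMod p) ≠ 0 := by
  rw [Ne, ZMod.natCast_eq_zero_iff]
  exact fun hd => absurd (Nat.le_of_dvd h0 hd) (not_le.mpr hmp)

lemma two_ne (hp : 3 < p) : (2 : ZMod p) ≠ 0 := by
  have := nat_ne_zero hp (m := 2) (by norm_num) (by omega); exact_mod_cast this

lemma three_ne (hp : 3 < p) : (3 : ZMod p) ≠ 0 := by
  have := nat_ne_zero hp (m := 3) (by norm_num) (by omega); exact_mod_cast this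

lemma ringChar_ne_two (hp : 3 < p) : ringChar (ZMod p) ≠ 2 := by
  rw [ZMod.ringChar_zmod_n]; omega

lemma qc_ne_one (hp : 3 < p) : qc p ≠ 1 :=
  (MulChar.ringHomComp_ne_one_iff (f := Int.castRingHom ℂ)
    Int.cast_injective).mpr (quadraticChar_ne_one (ringChar_ne_two hp))

lemma qc_quadratic : (qc p).IsQuadratic :=
  (quadraticChar_isQuadratic (ZMod p)).comp _

lemma qc_inv : (qc p)⁻¹ = qc p := qc_quadratic.inv

lemma qc_sq : qc p * qc p = 1 := by
  have := qc_quadratic (p := p).sq_eq_one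
  rwa [pow_two] at this

lemma qc_mul_self {x : ZMod p} (hx : x ≠ 0) : qc p x * qc p x = 1 := by
  have : (qc p * qc p) x = 1 := by rw [qc_sq]; exact MulChar.one_apply (isUnit_iff_ne_zero.mpr hx)
  rwa [MulChar.mul_apply] at this

lemma qc_inv_apply (x : ZMod p) : qc p x⁻¹ = qc p x := by
  conv_lhs => rw [← MulChar.inv_apply' (qc p) x, qc_inv]

lemma qc_sq_apply {x : ZMod p} (hx : x ≠ 0) : qc p (x * x) = 1 := by
  rw [map_mul]; exact qc_mul_self hx

lemma card_F : (Fintype.card (ZMod p) : ℂ) = (p : ℂ) := by rw [ZMod.card]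

lemma p_ne_zero : (p : ℂ) ≠ 0 := by
  exact_mod_cast (Fact.out : p.Prime).ne_zero

end basic

section gauss

variable (hp : 3 < p) (ψ : AddChar (ZMod p) ℂ) (hψ : ψ ≠ 1)

lemma gauss_one (hψ : ψ ≠ 1) : gaussSum (1 : MulChar (ZMod p) ℂ) ψ = -1 := by
  have h0 : ∑ a : ZMod p, ψ a = 0 := AddChar.sum_eq_zero_of_ne_one hψ
  rw [gaussSum]
  have key : ∀ a : ZMod p, (1 : MulChar (ZMod p) ℂ) a * ψ a
      = ψ a - (if a = 0 then ψ a else 0) := by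
    intro a
    by_cases ha : a = 0
    · subst ha
      simp [MulChar.map_nonunit _ (not_isUnit_zero (M₀ := ZMod p))]
    · simp [ha, MulChar.one_apply (isUnit_iff_ne_zero.mpr ha)]
  rw [Finset.sum_congr rfl fun a _ => key a, Finset.sum_sub_distrib, h0,
    Finset.sum_ite_eq' Finset.univ (0 : ZMod p) (fun a => ψ a)]
  simp

lemma gauss_mul_gauss_inv (hψ : ψ ≠ 1) {χ : MulChar (ZMod p) ℂ} (hχ : χ ≠ 1) :
    gaussSum χ ψ * gaussSum χ⁻¹ ψ = χ (-1) * (p : ℂ) := by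
  have h := gaussSum_mul_gaussSum_eq_card hχ (AddChar.IsPrimitive.of_ne_one hψ)
  have h2 := mul_gaussSum_inv_eq_gaussSum χ⁻¹ ψ
  calc gaussSum χ ψ * gaussSum χ⁻¹ ψ
      = gaussSum χ ψ * (χ⁻¹ (-1) * gaussSum χ⁻¹ ψ⁻¹) := by rw [h2]
    _ = χ⁻¹ (-1) * (gaussSum χ ψ * gaussSum χ⁻¹ ψ⁻¹) := by ring
    _ = χ (-1) * (p : ℂ) := by
        rw [h, MulChar.inv_apply', inv_neg_one, card_F]

lemma gauss_ne_zero (hψ : ψ ≠ 1) (χ : MulChar (ZMod p) ℂ) : gaussSum χ ψ ≠ 0 := by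
  by_cases hχ : χ = 1
  · rw [hχ, gauss_one ψ hψ]; norm_num
  · exact gaussSum_ne_zero_of_nontrivial
      (by rw [card_F]; exact p_ne_zero) hχ (AddChar.IsPrimitive.of_ne_one hψ)

lemma gauss_qc_sq (hp : 3 < p) (hψ : ψ ≠ 1) :
    gaussSum (qc p) ψ * gaussSum (qc p) ψ = qc p (-1) * (p : ℂ) := by
  have h := gaussSum_sq (qc_ne_one hp) qc_quadratic (AddChar.IsPrimitive.of_ne_one hψ)
  rw [pow_two] at h
  rw [← card_F]
  exact h

/-- twisted Gauss sum -/
lemma gauss_twist (hp : 3 < p) (hψ : ψ ≠ 1) (c : ZMod p) :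
    ∑ y : ZMod p, qc p y * ψ (c * y) = qc p c * gaussSum (qc p) ψ := by
  by_cases hc : c = 0
  · subst hc
    simp only [zero_mul, AddChar.map_zero_eq_one, mul_one, MulChar.map_zero, zero_mul]
    exact MulChar.sum_eq_zero_of_ne_one (qc_ne_one hp)
  · have hu : IsUnit c := isUnit_iff_ne_zero.mpr hc
    have h := gaussSum_mulShift (qc p) ψ hu.unit
    rw [hu.unit_spec] at h
    have he : gaussSum (qc p) (AddChar.mulShift ψ c) = ∑ y, qc p y * ψ (c * y) := by
      simp [gaussSum, AddChar.mulShift_apply]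
    calc ∑ y : ZMod p, qc p y * ψ (c * y)
        = qc p c * (qc p c * gaussSum (qc p) (AddChar.mulShift ψ c)) := by
          rw [← mul_assoc, qc_mul_self hc, one_mul, he]
      _ = qc p c * gaussSum (qc p) ψ := by rw [h]

end gauss

section jacobi

variable (ψ : AddChar (ZMod p) ℂ)

/-- The quadratic Jacobi sum identity `χ(4)·J(χ,χ) = J(χ,φ)`. -/
lemma jacobi_four (hp : 3 < p) {χ : MulChar (ZMod p) ℂ} (hχ : χ ≠ 1) :
    χ 4 * jacobiSum χ χ = jacobiSum χ (qc p) := by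
  have h2 : (2 : ZMod p) ≠ 0 := two_ne hp
  have h2' : (2⁻¹ : ZMod p) ≠ 0 := inv_ne_zero h2
  calc χ 4 * jacobiSum χ χ
      = ∑ x : ZMod p, χ (4 * (x * (1 - x))) := by
        rw [jacobiSum, Finset.mul_sum]
        exact Finset.sum_congr rfl fun x _ => by rw [map_mul, map_mul]
    _ = ∑ s : ZMod p, χ (1 - s ^ 2) := by
        refine (Equiv.sum_comp ((Equiv.addRight (1 : ZMod p)).trans
          (Equiv.mulRight₀ (2⁻¹ : ZMod p) h2')) fun x => χ (4 * (x * (1 - x)))).symm.trans ?_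
        refine Finset.sum_congr rfl fun s _ => ?_
        have hs : ((Equiv.addRight (1 : ZMod p)).trans
            (Equiv.mulRight₀ (2⁻¹ : ZMod p) h2')) s = (s + 1) * 2⁻¹ := rfl
        rw [hs]
        congr 1
        field_simp
        ring
    _ = ∑ u : ZMod p, ((quadraticChar (ZMod p) u : ℂ) + 1) * χ (1 - u) := by
        rw [← Finset.sum_fiberwise_of_maps_to (fun x _ => Finset.mem_univ (x ^ 2))
          (fun s => χ (1 - s ^ 2))]
        refine Finset.sum_congr rfl fun u _ => ?_
        have hcard : ((Finset.univ.filter fun s : ZMod p => s ^ 2 = u).card : ℂ)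
            = (quadraticChar (ZMod p) u : ℂ) + 1 := by
          have := quadraticChar_card_sqrts (ringChar_ne_two hp) u
          rw [Set.toFinset_setOf] at this
          exact_mod_cast congrArg (Int.cast : ℤ → ℂ) this
        calc ∑ s ∈ Finset.univ.filter fun s : ZMod p => s ^ 2 = u, χ (1 - s ^ 2)
            = ∑ _s ∈ Finset.univ.filter fun s : ZMod p => s ^ 2 = u, χ (1 - u) := by
              refine Finset.sum_congr rfl fun s hs => ?_
              rw [(Finset.mem_filter.mp hs).2]
          _ = ((Finset.univ.filter fun s : ZMod p => s ^ 2 = u).card : ℂ) * χ (1 - u) := by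
              rw [Finset.sum_const, nsmul_eq_mul]
          _ = ((quadraticChar (ZMod p) u : ℂ) + 1) * χ (1 - u) := by rw [hcard]
    _ = jacobiSum (qc p) χ + ∑ u : ZMod p, χ (1 - u) := by
        rw [jacobiSum, ← Finset.sum_add_distrib]
        refine Finset.sum_congr rfl fun u _ => ?_
        rw [add_mul, one_mul]
        congr 1
    _ = jacobiSum χ (qc p) := by
        rw [jacobiSum_comm]
        have : ∑ u : ZMod p, χ (1 - u) = ∑ v : ZMod p, χ v :=
          Equiv.sum_comp (Equiv.subLeft (1 : ZMod p)) fun v => χ v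
        rw [this, MulChar.sum_eq_zero_of_ne_one hχ, add_zero]

/-- `χ² = 1` implies `χ = 1` or `χ = qc p`. -/
lemma sq_eq_one_cases (hp : 3 < p) {χ : MulChar (ZMod p) ℂ} (h : χ ^ 2 = 1) :
    χ = 1 ∨ χ = qc p := by
  by_cases h1 : χ = 1
  · exact Or.inl h1
  right
  obtain ⟨e⟩ := MulChar.mulEquiv_units (ZMod p) ℂ
  have neg_one_ne : (-1 : (ZMod p)ˣ) ≠ 1 := by
    intro hcon
    apply two_ne hp
    have : ((-1 : (ZMod p)ˣ) : ZMod p) = ((1 : (ZMod p)ˣ) : ZMod p) := by rw [hcon]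
    simp only [Units.val_neg, Units.val_one] at this
    linear_combination -this
  have key : ∀ σ : MulChar (ZMod p) ℂ, σ ^ 2 = 1 → σ ≠ 1 → e σ = -1 := by
    intro σ hσ2 hσ1
    have hu : (e σ) * (e σ) = 1 := by
      rw [← map_mul, ← pow_two, hσ2, map_one]
    have : ((e σ : (ZMod p)ˣ) : ZMod p) * ((e σ : (ZMod p)ˣ) : ZMod p) = 1 := by
      rw [← Units.val_mul, hu, Units.val_one]
    rcases mul_self_eq_one_iff.mp this with hc | hc
    · exfalso
      apply hσ1
      apply e.injective
      rw [map_one]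
      exact Units.ext (by rw [hc, Units.val_one])
    · exact Units.ext (by rw [hc]; simp)
  have hq2 : (qc p) ^ 2 = 1 := qc_quadratic.sq_eq_one
  apply e.injective
  rw [key χ h h1, key (qc p) hq2 (qc_ne_one hp)]

/-- Hasse-Davenport product relation for the prime 2. -/
lemma HD2 (hp : 3 < p) (hψ : ψ ≠ 1) (χ : MulChar (ZMod p) ℂ) :
    gaussSum (χ ^ 2) ψ * gaussSum (qc p) ψ
      = χ 4 * (gaussSum χ ψ * gaussSum (χ * qc p) ψ) := by
  have h4 : (4 : ZMod p) = 2 * 2 := by norm_num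
  have h4u : IsUnit (4 : ZMod p) := by
    rw [h4]; exact (isUnit_iff_ne_zero.mpr (mul_ne_zero (two_ne hp) (two_ne hp)))
  by_cases h1 : χ = 1
  · subst h1
    rw [one_pow, one_mul, MulChar.one_apply h4u, gauss_one ψ hψ]
    ring
  by_cases hq : χ = qc p
  · subst hq
    have e1 : (qc p) ^ 2 = 1 := qc_quadratic.sq_eq_one
    have e2 : qc p * qc p = 1 := qc_sq
    have e3 : qc p 4 = 1 := by rw [h4]; exact qc_sq_apply (two_ne hp)
    rw [e1, e2, e3, gauss_one ψ hψ]
    ring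
  -- generic case
  have hsq : χ ^ 2 ≠ 1 := by
    intro hcon
    rcases sq_eq_one_cases hp hcon with hc | hc
    exacts [h1 hc, hq hc]
  have hmm : χ * χ ≠ 1 := by rwa [← pow_two]
  have hmq : χ * qc p ≠ 1 := by
    intro hcon
    apply hq
    have : χ = (qc p)⁻¹ := eq_inv_of_mul_eq_one_left hcon
    rwa [qc_inv] at this
  have J1 : gaussSum (χ * χ) ψ * jacobiSum χ χ = gaussSum χ ψ * gaussSum χ ψ :=
    jacobiSum_mul_nontrivial hmm ψ
  have J2 : gaussSum (χ * qc p) ψ * jacobiSum χ (qc p)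
      = gaussSum χ ψ * gaussSum (qc p) ψ := jacobiSum_mul_nontrivial hmq ψ
  have J3 : χ 4 * jacobiSum χ χ = jacobiSum χ (qc p) := jacobi_four hp h1
  have e1 : gaussSum (χ ^ 2) ψ * jacobiSum χ χ = gaussSum χ ψ * gaussSum χ ψ := by
    rw [pow_two]; exact J1
  have Jnz : jacobiSum χ χ ≠ 0 := by
    intro hcon
    apply gauss_ne_zero ψ hψ χ
    have := e1
    rw [hcon, mul_zero] at this
    exact (mul_self_eq_zero.mp this.symm)
  apply mul_right_cancel₀ Jnz
  linear_combination gaussSum (qc p) ψ * e1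
    - gaussSum χ ψ * gaussSum (χ * qc p) ψ * J3 - gaussSum χ ψ * J2

end jacobi

section terms

variable (ψ : AddChar (ZMod p) ℂ)

/-- The summand of the theorem. -/
noncomputable def A (ψ : AddChar (ZMod p) ℂ) (χ : MulChar (ZMod p) ℂ) : ℂ :=
  (gaussSum (χ ^ 4) ψ * gaussSum χ⁻¹ ψ * gaussSum ((χ ^ 6)⁻¹) ψ) /
    (gaussSum (χ ^ 2) ψ * gaussSum ((χ ^ 2)⁻¹) ψ * gaussSum ((χ ^ 3)⁻¹) ψ) *
    χ ((27 : ZMod p) / 4)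

/-- The reduced three-Gauss-sum form. -/
noncomputable def C (ψ : AddChar (ZMod p) ℂ) (χ : MulChar (ZMod p) ℂ) : ℂ :=
  qc p (-1) * χ (-(27 / 4) : ZMod p) *
    (gaussSum (χ * qc p) ψ * gaussSum (χ ^ 2 * qc p) ψ * gaussSum ((χ ^ 3)⁻¹ * qc p) ψ) /
    ((p : ℂ) * gaussSum (qc p) ψ)

lemma neg_one_ne (hp : 3 < p) : (-1 : ZMod p) ≠ 0 := neg_ne_zero.mpr one_ne_zero

lemma four_ne (hp : 3 < p) : (4 : ZMod p) ≠ 0 := by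
  have : (4 : ZMod p) = 2 * 2 := by norm_num
  rw [this]; exact mul_ne_zero (two_ne hp) (two_ne hp)

lemma val274_ne (hp : 3 < p) : ((27 : ZMod p) / 4) ≠ 0 := by
  have h27 : (27 : ZMod p) ≠ 0 := by
    have : (27 : ZMod p) = 3 * (3 * 3) := by norm_num
    rw [this]
    exact mul_ne_zero (three_ne hp) (mul_ne_zero (three_ne hp) (three_ne hp))
  exact div_ne_zero h27 (four_ne hp)

lemma A_eq_C (hp : 3 < p) (hψ : ψ ≠ 1) {χ : MulChar (ZMod p) ℂ}
    (h1 : χ ≠ 1) (h2 : χ ≠ qc p) : A ψ χ = C ψ χ := by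
  have hsq : χ ^ 2 ≠ 1 := by
    intro hcon
    rcases sq_eq_one_cases hp hcon with hc | hc
    exacts [h1 hc, h2 hc]
  have h4 : (4 : ZMod p) ≠ 0 := four_ne hp
  have e1 : gaussSum (χ ^ 4) ψ * gaussSum (qc p) ψ
      = (χ 4) ^ 2 * (gaussSum (χ ^ 2) ψ * gaussSum (χ ^ 2 * qc p) ψ) := by
    have h := HD2 ψ hp hψ (χ ^ 2)
    rw [show ((χ ^ 2) ^ 2 : MulChar (ZMod p) ℂ) = χ ^ 4 by rw [← pow_mul]] at h
    rwa [MulChar.pow_apply' χ two_ne_zero] at h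
  have e2 : gaussSum ((χ ^ 6)⁻¹) ψ * gaussSum (qc p) ψ
      = (χ 4⁻¹) ^ 3 * (gaussSum ((χ ^ 3)⁻¹) ψ * gaussSum ((χ ^ 3)⁻¹ * qc p) ψ) := by
    have h := HD2 ψ hp hψ ((χ ^ 3)⁻¹)
    rw [show (((χ ^ 3)⁻¹) ^ 2 : MulChar (ZMod p) ℂ) = (χ ^ 6)⁻¹ by
      rw [inv_pow, ← pow_mul]] at h
    rwa [MulChar.inv_apply', MulChar.pow_apply' χ (by norm_num : (3:ℕ) ≠ 0)] at h
  have e3 : gaussSum (χ ^ 2) ψ * gaussSum (qc p) ψ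
      = χ 4 * (gaussSum χ ψ * gaussSum (χ * qc p) ψ) := HD2 ψ hp hψ χ
  have e4 : gaussSum χ ψ * gaussSum χ⁻¹ ψ = χ (-1) * (p : ℂ) :=
    gauss_mul_gauss_inv ψ hψ h1
  have e5 : gaussSum (χ ^ 2) ψ * gaussSum ((χ ^ 2)⁻¹) ψ = (χ (-1)) ^ 2 * (p : ℂ) := by
    have h := gauss_mul_gauss_inv ψ hψ hsq
    rwa [MulChar.pow_apply' χ two_ne_zero] at h
  have e6 : gaussSum (qc p) ψ * gaussSum (qc p) ψ = qc p (-1) * (p : ℂ) :=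
    gauss_qc_sq ψ hp hψ
  have e7 : qc p (-1) * qc p (-1) = 1 := qc_mul_self (neg_one_ne hp)
  have e8 : χ 4 * χ 4⁻¹ = 1 := by rw [← map_mul, mul_inv_cancel₀ h4, map_one]
  have e9 : χ (-(27 / 4) : ZMod p) = χ (-1) * χ ((27 : ZMod p) / 4) := by
    rw [← map_mul, neg_one_mul]
  have e10 : χ (-1) * χ (-1) = 1 := by
    rw [← map_mul]
    norm_num
  have hM : gaussSum (qc p) ψ * gaussSum (qc p) ψ * gaussSum χ ψ * χ 4 ≠ 0 := by
    have hx4 : χ 4 ≠ 0 := fun hc => by rw [hc, zero_mul] at e8; exact zero_ne_one e8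
    exact mul_ne_zero (mul_ne_zero (mul_ne_zero (gauss_ne_zero ψ hψ _)
      (gauss_ne_zero ψ hψ _)) (gauss_ne_zero ψ hψ _)) hx4
  have key : (gaussSum (χ ^ 4) ψ * gaussSum χ⁻¹ ψ * gaussSum ((χ ^ 6)⁻¹) ψ
        * χ ((27 : ZMod p) / 4)) * ((p : ℂ) * gaussSum (qc p) ψ)
        * (gaussSum (qc p) ψ * gaussSum (qc p) ψ * gaussSum χ ψ * χ 4)
      = (qc p (-1) * χ (-(27 / 4) : ZMod p)
          * (gaussSum (χ * qc p) ψ * gaussSum (χ ^ 2 * qc p) ψ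
            * gaussSum ((χ ^ 3)⁻¹ * qc p) ψ))
        * (gaussSum (χ ^ 2) ψ * gaussSum ((χ ^ 2)⁻¹) ψ * gaussSum ((χ ^ 3)⁻¹) ψ)
        * (gaussSum (qc p) ψ * gaussSum (qc p) ψ * gaussSum χ ψ * χ 4) := by
    linear_combination (((p : ℂ)) * (gaussSum χ⁻¹ ψ) * (gaussSum ((χ ^ 6)⁻¹) ψ) * (gaussSum (qc p) ψ) * (gaussSum (qc p) ψ) * (gaussSum χ ψ) * (χ 4) * (χ ((27 : ZMod p) / 4))) * e1
    + (((p : ℂ)) * (gaussSum χ⁻¹ ψ) * (gaussSum (χ ^ 2 * qc p) ψ) * (gaussSum (χ ^ 2) ψ) * (gaussSum (qc p) ψ) * (gaussSum χ ψ) * (χ 4) * (χ 4) * (χ 4) * (χ ((27 : ZMod p) / 4))) * e2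
    + (((p : ℂ)) * (gaussSum (χ ^ 2 * qc p) ψ) * (gaussSum ((χ ^ 3)⁻¹ * qc p) ψ) * (gaussSum (χ ^ 2) ψ) * (gaussSum ((χ ^ 3)⁻¹) ψ) * (gaussSum (qc p) ψ) * (χ 4) * (χ 4) * (χ 4) * (χ ((27 : ZMod p) / 4)) * (χ 4⁻¹) * (χ 4⁻¹) * (χ 4⁻¹)) * e4
    + ((gaussSum (χ ^ 2 * qc p) ψ) * (gaussSum ((χ ^ 3)⁻¹ * qc p) ψ) * (gaussSum (χ ^ 2) ψ) * (gaussSum ((χ ^ 2)⁻¹) ψ) * (gaussSum ((χ ^ 3)⁻¹) ψ) * (gaussSum (qc p) ψ) * (gaussSum (qc p) ψ) * (qc p (-1)) * (χ (-(27 / 4) : ZMod p))) * e3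
    + (-(gaussSum (χ ^ 2 * qc p) ψ) * (gaussSum ((χ ^ 3)⁻¹ * qc p) ψ) * (gaussSum (χ ^ 2) ψ) * (gaussSum (χ ^ 2) ψ) * (gaussSum ((χ ^ 2)⁻¹) ψ) * (gaussSum ((χ ^ 3)⁻¹) ψ) * (gaussSum (qc p) ψ) * (qc p (-1)) * (χ (-(27 / 4) : ZMod p))) * e6
    + (-((p : ℂ)) * (gaussSum (χ ^ 2 * qc p) ψ) * (gaussSum ((χ ^ 3)⁻¹ * qc p) ψ) * (gaussSum (χ ^ 2) ψ) * (gaussSum (χ ^ 2) ψ) * (gaussSum ((χ ^ 2)⁻¹) ψ) * (gaussSum ((χ ^ 3)⁻¹) ψ) * (gaussSum (qc p) ψ) * (χ (-(27 / 4) : ZMod p))) * e7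
    + (-((p : ℂ)) * (gaussSum (χ ^ 2 * qc p) ψ) * (gaussSum ((χ ^ 3)⁻¹ * qc p) ψ) * (gaussSum (χ ^ 2) ψ) * (gaussSum ((χ ^ 3)⁻¹) ψ) * (gaussSum (qc p) ψ) * (χ (-(27 / 4) : ZMod p))) * e5
    + (-((p : ℂ)) * ((p : ℂ)) * (gaussSum (χ ^ 2 * qc p) ψ) * (gaussSum ((χ ^ 3)⁻¹ * qc p) ψ) * (gaussSum (χ ^ 2) ψ) * (gaussSum ((χ ^ 3)⁻¹) ψ) * (gaussSum (qc p) ψ) * (χ (-(27 / 4) : ZMod p))) * e10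
    + (-((p : ℂ)) * ((p : ℂ)) * (gaussSum (χ ^ 2 * qc p) ψ) * (gaussSum ((χ ^ 3)⁻¹ * qc p) ψ) * (gaussSum (χ ^ 2) ψ) * (gaussSum ((χ ^ 3)⁻¹) ψ) * (gaussSum (qc p) ψ)) * e9
    + (((p : ℂ)) * ((p : ℂ)) * (gaussSum (χ ^ 2 * qc p) ψ) * (gaussSum ((χ ^ 3)⁻¹ * qc p) ψ) * (χ (-1)) * (gaussSum (χ ^ 2) ψ) * (gaussSum ((χ ^ 3)⁻¹) ψ) * (gaussSum (qc p) ψ) * (χ 4) * (χ 4) * (χ ((27 : ZMod p) / 4)) * (χ 4⁻¹) * (χ 4⁻¹) + ((p : ℂ)) * ((p : ℂ)) * (gaussSum (χ ^ 2 * qc p) ψ) * (gaussSum ((χ ^ 3)⁻¹ * qc p) ψ) * (χ (-1)) * (gaussSum (χ ^ 2) ψ) * (gaussSum ((χ ^ 3)⁻¹) ψ) * (gaussSum (qc p) ψ) * (χ 4) * (χ ((27 : ZMod p) / 4)) * (χ 4⁻¹) + ((p : ℂ)) * ((p : ℂ)) * (gaussSum (χ ^ 2 * qc p) ψ) * (gaussSum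 ((χ ^ 3)⁻¹ * qc p) ψ) * (χ (-1)) * (gaussSum (χ ^ 2) ψ) * (gaussSum ((χ ^ 3)⁻¹) ψ) * (gaussSum (qc p) ψ) * (χ ((27 : ZMod p) / 4))) * e8
  have cleared := mul_right_cancel₀ hM key
  have hD : gaussSum (χ ^ 2) ψ * gaussSum ((χ ^ 2)⁻¹) ψ * gaussSum ((χ ^ 3)⁻¹) ψ ≠ 0 :=
    mul_ne_zero (mul_ne_zero (gauss_ne_zero ψ hψ _) (gauss_ne_zero ψ hψ _))
      (gauss_ne_zero ψ hψ _)
  have hPG : (p : ℂ) * gaussSum (qc p) ψ ≠ 0 := mul_ne_zero p_ne_zero (gauss_ne_zero ψ hψ _)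
  rw [A, C, div_mul_eq_mul_div, div_eq_div_iff hD hPG]
  exact cleared

lemma A_one (hp : 3 < p) (hψ : ψ ≠ 1) : A ψ (1 : MulChar (ZMod p) ℂ) = 1 := by
  rw [A]
  simp only [one_pow, inv_one, gauss_one ψ hψ,
    MulChar.one_apply (isUnit_iff_ne_zero.mpr (val274_ne hp))]
  norm_num

lemma C_one (hp : 3 < p) (hψ : ψ ≠ 1) : C ψ (1 : MulChar (ZMod p) ℂ) = 1 := by
  have hval : -(27 / 4 : ZMod p) ≠ 0 := neg_ne_zero.mpr (val274_ne hp)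
  rw [C]
  simp only [one_pow, inv_one, one_mul,
    MulChar.one_apply (isUnit_iff_ne_zero.mpr hval)]
  have e6 : gaussSum (qc p) ψ * gaussSum (qc p) ψ = qc p (-1) * (p : ℂ) :=
    gauss_qc_sq ψ hp hψ
  have e7 : qc p (-1) * qc p (-1) = 1 := qc_mul_self (neg_one_ne hp)
  have hPG : (p : ℂ) * gaussSum (qc p) ψ ≠ 0 := mul_ne_zero p_ne_zero (gauss_ne_zero ψ hψ _)
  rw [div_eq_one_iff_eq hPG]
  linear_combination qc p (-1) * gaussSum (qc p) ψ * e6 + (p : ℂ) * gaussSum (qc p) ψ * e7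

lemma qc_pow_lemmas (hp : 3 < p) :
    (qc p) ^ 4 = 1 ∧ (qc p) ^ 6 = 1 ∧ (qc p) ^ 3 = qc p := by
  have h2 : (qc p) ^ 2 = 1 := qc_quadratic.sq_eq_one
  refine ⟨?_, ?_, ?_⟩
  · rw [show (4:ℕ) = 2 * 2 from rfl, pow_mul, h2, one_pow]
  · rw [show (6:ℕ) = 2 * 3 from rfl, pow_mul, h2, one_pow]
  · rw [show (3:ℕ) = 2 + 1 from rfl, pow_add, h2, one_mul, pow_one]

lemma A_qc (hp : 3 < p) (hψ : ψ ≠ 1) : A ψ (qc p) = qc p ((27 : ZMod p) / 4) := by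
  obtain ⟨h4, h6, h3⟩ := qc_pow_lemmas (p := p) hp
  have h2 : (qc p) ^ 2 = 1 := qc_quadratic.sq_eq_one
  rw [A, h4, h6, h2, h3, qc_inv, inv_one, gauss_one ψ hψ]
  have hg : gaussSum (qc p) ψ ≠ 0 := gauss_ne_zero ψ hψ _
  field_simp

lemma C_qc (hp : 3 < p) (hψ : ψ ≠ 1) :
    C ψ (qc p) = qc p ((27 : ZMod p) / 4) / (p : ℂ) := by
  obtain ⟨h4, h6, h3⟩ := qc_pow_lemmas (p := p) hp
  have h2 : (qc p) ^ 2 = 1 := qc_quadratic.sq_eq_one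
  have hqq : qc p * qc p = 1 := qc_sq
  rw [C, h3, qc_inv, h2, one_mul, hqq, gauss_one ψ hψ]
  have e9 : qc p (-(27 / 4) : ZMod p) = qc p (-1) * qc p ((27 : ZMod p) / 4) := by
    rw [← map_mul, neg_one_mul]
  have e7 : qc p (-1) * qc p (-1) = 1 := qc_mul_self (neg_one_ne hp)
  have hPG : (p : ℂ) * gaussSum (qc p) ψ ≠ 0 := mul_ne_zero p_ne_zero (gauss_ne_zero ψ hψ _)
  have hp0 : (p : ℂ) ≠ 0 := p_ne_zero
  rw [e9, div_eq_div_iff hPG hp0]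
  linear_combination (qc p ((27 : ZMod p) / 4) * gaussSum (qc p) ψ * (p : ℂ)) * e7

end terms

section bigsum

variable (ψ : AddChar (ZMod p) ℂ)

lemma qc_zero : qc p (0 : ZMod p) = 0 := MulChar.map_nonunit _ not_isUnit_zero

lemma mulc_apply (χ₁ χ₂ : MulChar (ZMod p) ℂ) (x : ZMod p) :
    (χ₁ * χ₂) x = χ₁ x * χ₂ x := rfl

lemma horth (u : ZMod p) :
    ∑ χ : MulChar (ZMod p) ℂ, χ u = if u = 1 then ((p : ℂ) - 1) else 0 := by
  have h := DirichletCharacter.sum_characters_eq (R := ℂ) (n := p) u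
  have hpt : (p.totient : ℂ) = (p : ℂ) - 1 := by
    rw [Nat.totient_prime Fact.out]
    push_cast [Nat.one_le_iff_ne_zero.mpr (Fact.out : p.Prime).ne_zero]
    ring
  rw [hpt] at h
  exact h

/-- Expansion of the product of three Gauss sums. -/
lemma step1 (hp : 3 < p) (χ : MulChar (ZMod p) ℂ) :
    χ (-(27 / 4) : ZMod p) * (gaussSum (χ * qc p) ψ * gaussSum (χ ^ 2 * qc p) ψ *
        gaussSum ((χ ^ 3)⁻¹ * qc p) ψ)
    = ∑ x : ZMod p, ∑ y : ZMod p, ∑ z : ZMod p,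
        χ ((-(27 / 4) : ZMod p) * z * y ^ 2 * (x⁻¹) ^ 3) *
          (qc p z * ψ z * (qc p y * ψ y) * (qc p x * ψ x)) := by
  simp only [gaussSum, Finset.mul_sum, Finset.sum_mul]
  refine Finset.sum_congr rfl fun x _ => ?_
  refine Finset.sum_congr rfl fun y _ => ?_
  refine Finset.sum_congr rfl fun z _ => ?_
  have hsplit : χ ((-(27 / 4) : ZMod p) * z * y ^ 2 * (x⁻¹) ^ 3)
      = χ (-(27 / 4) : ZMod p) * χ z * (χ y) ^ 2 * (χ x⁻¹) ^ 3 := by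
    rw [map_mul, map_mul, map_mul, map_pow, map_pow]
  rw [hsplit, mulc_apply, mulc_apply, mulc_apply, MulChar.pow_apply' χ two_ne_zero,
    MulChar.inv_apply', MulChar.pow_apply' χ (by norm_num : (3:ℕ) ≠ 0)]
  ring

lemma claim1 (hp : 3 < p) (c : ℂ) (y x : ZMod p) :
    (∑ z : ZMod p, (if (-(27 / 4) : ZMod p) * z * y ^ 2 * (x⁻¹) ^ 3 = 1 then c else 0) *
        (qc p z * ψ z * (qc p y * ψ y) * (qc p x * ψ x)))
    = c * (qc p (((-(27 / 4) : ZMod p) * y ^ 2 * (x⁻¹) ^ 3)⁻¹) *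
        ψ (((-(27 / 4) : ZMod p) * y ^ 2 * (x⁻¹) ^ 3)⁻¹) * (qc p y * ψ y) * (qc p x * ψ x)) := by
  have hA : (-(27 / 4) : ZMod p) ≠ 0 := neg_ne_zero.mpr (val274_ne hp)
  by_cases hy : y = 0
  · subst hy
    simp [qc_zero]
  by_cases hx : x = 0
  · subst hx
    simp [qc_zero]
  have he : (-(27 / 4) : ZMod p) * y ^ 2 * (x⁻¹) ^ 3 ≠ 0 :=
    mul_ne_zero (mul_ne_zero hA (pow_ne_zero 2 hy)) (pow_ne_zero 3 (inv_ne_zero hx))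
  have hcond : ∀ z : ZMod p,
      ((-(27 / 4) : ZMod p) * z * y ^ 2 * (x⁻¹) ^ 3 = 1)
        ↔ (z = ((-(27 / 4) : ZMod p) * y ^ 2 * (x⁻¹) ^ 3)⁻¹) := by
    intro z
    constructor
    · intro h
      have hxe : z * ((-(27 / 4) : ZMod p) * y ^ 2 * (x⁻¹) ^ 3) = 1 := by
        linear_combination h
      exact eq_inv_of_mul_eq_one_left hxe
    · intro h
      subst h
      have := inv_mul_cancel₀ he
      linear_combination this
  simp only [hcond, ite_mul, zero_mul]
  rw [Finset.sum_ite_eq' Finset.univ _ (fun z => c * (qc p z * ψ z * (qc p y * ψ y) *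
    (qc p x * ψ x))), if_pos (Finset.mem_univ _)]

lemma claim2 (hp : 3 < p) (c : ℂ) (y : ZMod p) :
    (∑ x : ZMod p, c * (qc p (((-(27 / 4) : ZMod p) * y ^ 2 * (x⁻¹) ^ 3)⁻¹) *
        ψ (((-(27 / 4) : ZMod p) * y ^ 2 * (x⁻¹) ^ 3)⁻¹) * (qc p y * ψ y) * (qc p x * ψ x)))
    = ∑ w : ZMod p, c * (qc p ((-(27 / 4) : ZMod p)⁻¹) * (qc p w) ^ 4 *
        (qc p y * ψ (y * (1 + w + w ^ 3 * (-(27 / 4) : ZMod p)⁻¹)))) := by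
  have hA : (-(27 / 4) : ZMod p) ≠ 0 := neg_ne_zero.mpr (val274_ne hp)
  by_cases hy : y = 0
  · subst hy
    simp [qc_zero]
  rw [← Equiv.sum_comp (Equiv.mulLeft₀ y hy) (fun x => c *
    (qc p (((-(27 / 4) : ZMod p) * y ^ 2 * (x⁻¹) ^ 3)⁻¹) *
      ψ (((-(27 / 4) : ZMod p) * y ^ 2 * (x⁻¹) ^ 3)⁻¹) * (qc p y * ψ y) * (qc p x * ψ x)))]
  refine Finset.sum_congr rfl fun w _ => ?_
  have hzw : (Equiv.mulLeft₀ y hy) w = y * w := rfl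
  rw [hzw]
  by_cases hw : w = 0
  · subst hw
    simp [qc_zero]
  have h1 : ((-(27 / 4) : ZMod p) * y ^ 2 * ((y * w)⁻¹) ^ 3) *
      (y * w ^ 3 * (-(27 / 4) : ZMod p)⁻¹) = 1 := by
    rw [mul_inv]
    rw [show ((-(27 / 4) : ZMod p) * y ^ 2 * (y⁻¹ * w⁻¹) ^ 3) *
        (y * w ^ 3 * (-(27 / 4) : ZMod p)⁻¹)
      = ((-(27 / 4) : ZMod p) * (-(27 / 4) : ZMod p)⁻¹) * (y * y⁻¹) ^ 3 * (w * w⁻¹) ^ 3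
      from by ring]
    rw [mul_inv_cancel₀ hA, mul_inv_cancel₀ hy, mul_inv_cancel₀ hw]
    norm_num
  have hx0 : ((-(27 / 4) : ZMod p) * y ^ 2 * ((y * w)⁻¹) ^ 3)⁻¹
      = y * w ^ 3 * (-(27 / 4) : ZMod p)⁻¹ := by
    have h2 := eq_inv_of_mul_eq_one_left h1
    rw [h2, inv_inv]
  rw [hx0]
  have hqy : qc p y * qc p y = 1 := qc_mul_self hy
  have hpsi : ψ (y * w ^ 3 * (-(27 / 4) : ZMod p)⁻¹) * ψ y * ψ (y * w)
      = ψ (y * (1 + w + w ^ 3 * (-(27 / 4) : ZMod p)⁻¹)) := by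
    rw [← AddChar.map_add_eq_mul, ← AddChar.map_add_eq_mul]
    congr 1
    ring
  have hqsplit : qc p (y * w ^ 3 * (-(27 / 4) : ZMod p)⁻¹)
      = qc p y * (qc p w) ^ 3 * qc p ((-(27 / 4) : ZMod p)⁻¹) := by
    rw [map_mul, map_mul, map_pow]
  have hqyw : qc p (y * w) = qc p y * qc p w := map_mul _ _ _
  rw [hqsplit, hqyw]
  linear_combination (c * qc p ((-(27 / 4) : ZMod p)⁻¹) * (qc p w) ^ 4 * qc p y *
      (ψ (y * w ^ 3 * (-(27 / 4) : ZMod p)⁻¹) * ψ y * ψ (y * w))) * hqy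
    + (c * qc p ((-(27 / 4) : ZMod p)⁻¹) * (qc p w) ^ 4 * qc p y) * hpsi

lemma claim3 (hp : 3 < p) :
    ∑ w : ZMod p, (qc p w) ^ 4 * qc p (1 + w + w ^ 3 * (-(27 / 4) : ZMod p)⁻¹)
    = qc p (-(4 / 27) : ZMod p) * (-(qc p (-3 : ZMod p) + qc p (-(9 / 2) : ZMod p))) := by
  have h2 : (2 : ZMod p) ≠ 0 := two_ne hp
  have h3 : (3 : ZMod p) ≠ 0 := three_ne hp
  have h27 : (27 : ZMod p) ≠ 0 := by
    have : (27 : ZMod p) = 3 * (3 * 3) := by norm_num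
    rw [this]; exact mul_ne_zero h3 (mul_ne_zero h3 h3)
  have h4 : (4 : ZMod p) ≠ 0 := four_ne hp
  have hAinv : ((-(27 / 4) : ZMod p))⁻¹ = -(4 / 27) := by rw [inv_neg, inv_div]
  have hfact : ∀ w : ZMod p, 1 + w + w ^ 3 * (-(27 / 4) : ZMod p)⁻¹
      = (-(4 / 27) : ZMod p) * ((w - 3) * (w + 3 / 2) ^ 2) := by
    intro w
    rw [hAinv]
    field_simp
    ring
  have hterm : ∀ w : ZMod p, (qc p w) ^ 4 * qc p (1 + w + w ^ 3 * (-(27 / 4) : ZMod p)⁻¹)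
      = qc p (-(4 / 27) : ZMod p) *
          ((qc p w) ^ 4 * (qc p (w + 3 / 2)) ^ 2 * qc p (w - 3)) := by
    intro w
    rw [hfact w, map_mul, map_mul, map_pow]
    ring
  rw [Finset.sum_congr rfl fun w _ => hterm w, ← Finset.mul_sum]
  congr 1
  -- now evaluate ∑ w, (qc w)^4 * (qc (w+3/2))^2 * qc (w-3)
  have hne32 : (0 : ZMod p) ≠ -(3 / 2) := by
    intro hc
    have : (3 / 2 : ZMod p) = 0 := by linear_combination hc
    rw [div_eq_zero_iff] at this
    rcases this with h | h
    exacts [h3 h, h2 (inv_eq_zero.mp (by rwa [← inv_eq_zero] at h))]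
  have hs : ({0, -(3 / 2)} : Finset (ZMod p)) ⊆ Finset.univ := Finset.subset_univ _
  rw [← Finset.sum_sdiff hs]
  have hpair0 : ∑ w ∈ ({0, -(3 / 2)} : Finset (ZMod p)),
      (qc p w) ^ 4 * (qc p (w + 3 / 2)) ^ 2 * qc p (w - 3) = qc p (-3 : ZMod p) * 0 := by
    rw [Finset.sum_pair hne32]
    have t1 : (qc p (0 : ZMod p)) ^ 4 = 0 := by rw [qc_zero]; ring
    have t2 : qc p ((-(3 / 2) : ZMod p) + 3 / 2) = 0 := by
      rw [show ((-(3 / 2) : ZMod p) + 3 / 2) = 0 by ring, qc_zero]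
    rw [t1, t2]
    ring
  rw [hpair0, mul_zero, add_zero]
  have hcongr : ∑ w ∈ Finset.univ \ ({0, -(3 / 2)} : Finset (ZMod p)),
      (qc p w) ^ 4 * (qc p (w + 3 / 2)) ^ 2 * qc p (w - 3)
      = ∑ w ∈ Finset.univ \ ({0, -(3 / 2)} : Finset (ZMod p)), qc p (w - 3) := by
    refine Finset.sum_congr rfl fun w hw => ?_
    rw [Finset.mem_sdiff, Finset.mem_insert, Finset.mem_singleton] at hw
    push_neg at hw
    obtain ⟨-, hw0, hw32⟩ := hw
    have hq1 : (qc p w) ^ 4 = 1 := by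
      have := qc_mul_self hw0
      calc (qc p w) ^ 4 = (qc p w * qc p w) * (qc p w * qc p w) := by ring
        _ = 1 := by rw [this, one_mul]
    have hw32' : w + 3 / 2 ≠ 0 := by
      intro hc
      exact hw32 (by linear_combination hc)
    have hq2 : (qc p (w + 3 / 2)) ^ 2 = 1 := by
      have := qc_mul_self hw32'
      calc (qc p (w + 3 / 2)) ^ 2 = qc p (w + 3 / 2) * qc p (w + 3 / 2) := by ring
        _ = 1 := this
    rw [hq1, hq2]
    ring
  rw [hcongr]
  have hsdiff : ∑ w ∈ Finset.univ \ ({0, -(3 / 2)} : Finset (ZMod p)), qc p (w - 3)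
      = (∑ w : ZMod p, qc p (w - 3)) -
        ∑ w ∈ ({0, -(3 / 2)} : Finset (ZMod p)), qc p (w - 3) := by
    rw [eq_sub_iff_add_eq, Finset.sum_sdiff hs]
  rw [hsdiff]
  have hzero : ∑ w : ZMod p, qc p (w - 3) = 0 := by
    have h := Equiv.sum_comp (Equiv.subRight (3 : ZMod p)) (fun v => qc p v)
    simp only [Equiv.subRight_apply] at h
    exact h.trans (MulChar.sum_eq_zero_of_ne_one (qc_ne_one hp))
  rw [hzero, Finset.sum_pair hne32]
  have ha1 : ((0 : ZMod p) - 3) = -3 := by ring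
  have ha2 : ((-(3 / 2) : ZMod p) - 3) = -(9 / 2) := by
    field_simp
    ring
  rw [ha1, ha2]
  ring

/-- The full character sum over the three-Gauss-sum expression. -/
lemma sum_W (hp : 3 < p) (hψ : ψ ≠ 1) :
    ∑ χ : MulChar (ZMod p) ℂ, χ (-(27 / 4) : ZMod p) *
        (gaussSum (χ * qc p) ψ * gaussSum (χ ^ 2 * qc p) ψ * gaussSum ((χ ^ 3)⁻¹ * qc p) ψ)
    = ((p : ℂ) - 1) * (-(qc p (-3 : ZMod p) + qc p (-(9 / 2) : ZMod p))) *
        gaussSum (qc p) ψ := by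
  have h27 : (27 : ZMod p) ≠ 0 := by
    have : (27 : ZMod p) = 3 * (3 * 3) := by norm_num
    rw [this]
    exact mul_ne_zero (three_ne hp) (mul_ne_zero (three_ne hp) (three_ne hp))
  have hb : (-(4 / 27) : ZMod p) ≠ 0 :=
    neg_ne_zero.mpr (div_ne_zero (four_ne hp) h27)
  have hAinv : ((-(27 / 4) : ZMod p))⁻¹ = -(4 / 27) := by rw [inv_neg, inv_div]
  calc ∑ χ : MulChar (ZMod p) ℂ, χ (-(27 / 4) : ZMod p) *
        (gaussSum (χ * qc p) ψ * gaussSum (χ ^ 2 * qc p) ψ * gaussSum ((χ ^ 3)⁻¹ * qc p) ψ)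
      = ∑ χ : MulChar (ZMod p) ℂ, ∑ x : ZMod p, ∑ y : ZMod p, ∑ z : ZMod p,
          χ ((-(27 / 4) : ZMod p) * z * y ^ 2 * (x⁻¹) ^ 3) *
            (qc p z * ψ z * (qc p y * ψ y) * (qc p x * ψ x)) :=
        Finset.sum_congr rfl fun χ _ => step1 ψ hp χ
    _ = ∑ x : ZMod p, ∑ y : ZMod p, ∑ z : ZMod p, ∑ χ : MulChar (ZMod p) ℂ,
          χ ((-(27 / 4) : ZMod p) * z * y ^ 2 * (x⁻¹) ^ 3) *
            (qc p z * ψ z * (qc p y * ψ y) * (qc p x * ψ x)) := by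
        rw [Finset.sum_comm]
        refine Finset.sum_congr rfl fun x _ => ?_
        rw [Finset.sum_comm]
        exact Finset.sum_congr rfl fun y _ => Finset.sum_comm
    _ = ∑ x : ZMod p, ∑ y : ZMod p, ∑ z : ZMod p,
          (if (-(27 / 4) : ZMod p) * z * y ^ 2 * (x⁻¹) ^ 3 = 1 then ((p : ℂ) - 1) else 0) *
            (qc p z * ψ z * (qc p y * ψ y) * (qc p x * ψ x)) := by
        refine Finset.sum_congr rfl fun x _ => Finset.sum_congr rfl fun y _ =>
          Finset.sum_congr rfl fun z _ => ?_
        rw [← Finset.sum_mul, horth]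
    _ = ∑ x : ZMod p, ∑ y : ZMod p, ((p : ℂ) - 1) *
          (qc p (((-(27 / 4) : ZMod p) * y ^ 2 * (x⁻¹) ^ 3)⁻¹) *
            ψ (((-(27 / 4) : ZMod p) * y ^ 2 * (x⁻¹) ^ 3)⁻¹) * (qc p y * ψ y) *
            (qc p x * ψ x)) :=
        Finset.sum_congr rfl fun x _ => Finset.sum_congr rfl fun y _ =>
          claim1 ψ hp ((p : ℂ) - 1) y x
    _ = ∑ y : ZMod p, ∑ x : ZMod p, ((p : ℂ) - 1) *
          (qc p (((-(27 / 4) : ZMod p) * y ^ 2 * (x⁻¹) ^ 3)⁻¹) *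
            ψ (((-(27 / 4) : ZMod p) * y ^ 2 * (x⁻¹) ^ 3)⁻¹) * (qc p y * ψ y) *
            (qc p x * ψ x)) := Finset.sum_comm
    _ = ∑ y : ZMod p, ∑ w : ZMod p, ((p : ℂ) - 1) * (qc p ((-(27 / 4) : ZMod p)⁻¹) *
          (qc p w) ^ 4 *
          (qc p y * ψ (y * (1 + w + w ^ 3 * (-(27 / 4) : ZMod p)⁻¹)))) :=
        Finset.sum_congr rfl fun y _ => claim2 ψ hp ((p : ℂ) - 1) y
    _ = ∑ w : ZMod p, ∑ y : ZMod p, ((p : ℂ) - 1) * (qc p ((-(27 / 4) : ZMod p)⁻¹) *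
          (qc p w) ^ 4 *
          (qc p y * ψ (y * (1 + w + w ^ 3 * (-(27 / 4) : ZMod p)⁻¹)))) := Finset.sum_comm
    _ = ∑ w : ZMod p, (((p : ℂ) - 1) * (qc p ((-(27 / 4) : ZMod p)⁻¹) *
          gaussSum (qc p) ψ)) *
          ((qc p w) ^ 4 * qc p (1 + w + w ^ 3 * (-(27 / 4) : ZMod p)⁻¹)) := by
        refine Finset.sum_congr rfl fun w _ => ?_
        have ht : ∑ y : ZMod p,
            qc p y * ψ (y * (1 + w + w ^ 3 * (-(27 / 4) : ZMod p)⁻¹))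
            = qc p (1 + w + w ^ 3 * (-(27 / 4) : ZMod p)⁻¹) * gaussSum (qc p) ψ := by
          rw [← gauss_twist ψ hp hψ (1 + w + w ^ 3 * (-(27 / 4) : ZMod p)⁻¹)]
          exact Finset.sum_congr rfl fun y _ => by rw [mul_comm y _]
        calc ∑ y : ZMod p, ((p : ℂ) - 1) * (qc p ((-(27 / 4) : ZMod p)⁻¹) *
              (qc p w) ^ 4 *
              (qc p y * ψ (y * (1 + w + w ^ 3 * (-(27 / 4) : ZMod p)⁻¹))))
            = (((p : ℂ) - 1) * (qc p ((-(27 / 4) : ZMod p)⁻¹) * (qc p w) ^ 4)) *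
              ∑ y : ZMod p, qc p y * ψ (y * (1 + w + w ^ 3 * (-(27 / 4) : ZMod p)⁻¹)) := by
              rw [Finset.mul_sum]
              exact Finset.sum_congr rfl fun y _ => by ring
          _ = (((p : ℂ) - 1) * (qc p ((-(27 / 4) : ZMod p)⁻¹) * gaussSum (qc p) ψ)) *
              ((qc p w) ^ 4 * qc p (1 + w + w ^ 3 * (-(27 / 4) : ZMod p)⁻¹)) := by
              rw [ht]
              ring
    _ = (((p : ℂ) - 1) * (qc p ((-(27 / 4) : ZMod p)⁻¹) * gaussSum (qc p) ψ)) *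
          ∑ w : ZMod p, (qc p w) ^ 4 * qc p (1 + w + w ^ 3 * (-(27 / 4) : ZMod p)⁻¹) := by
        rw [← Finset.mul_sum]
    _ = ((p : ℂ) - 1) * (-(qc p (-3 : ZMod p) + qc p (-(9 / 2) : ZMod p))) *
          gaussSum (qc p) ψ := by
        rw [claim3 hp, hAinv]
        have hbb : qc p (-(4 / 27) : ZMod p) * qc p (-(4 / 27) : ZMod p) = 1 :=
          qc_mul_self hb
        linear_combination (((p : ℂ) - 1) * gaussSum (qc p) ψ *
          (-(qc p (-3 : ZMod p) + qc p (-(9 / 2) : ZMod p)))) * hbb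

lemma qc_neg_three (hp : 3 < p) : qc p (-3 : ZMod p) = qc p (-1) * qc p 3 := by
  rw [← map_mul, show ((-1 : ZMod p) * 3) = -3 by ring]

lemma qc_neg_nine_half (hp : 3 < p) :
    qc p (-(9 / 2) : ZMod p) = qc p (-1) * qc p 2 := by
  rw [show (-(9 / 2) : ZMod p) = -1 * (3 * 3 * 2⁻¹) by rw [div_eq_mul_inv]; ring,
    map_mul, map_mul, qc_sq_apply (three_ne hp), qc_inv_apply, one_mul]

lemma sum_C (hp : 3 < p) (hψ : ψ ≠ 1) :
    ∑ χ : MulChar (ZMod p) ℂ, C ψ χ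
      = -(qc p 2 + qc p 3) * (((p : ℂ) - 1) / p) := by
  have hgq : gaussSum (qc p) ψ ≠ 0 := gauss_ne_zero ψ hψ _
  have hC : ∀ χ : MulChar (ZMod p) ℂ, C ψ χ
      = (qc p (-1) / ((p : ℂ) * gaussSum (qc p) ψ)) * (χ (-(27 / 4) : ZMod p) *
        (gaussSum (χ * qc p) ψ * gaussSum (χ ^ 2 * qc p) ψ *
          gaussSum ((χ ^ 3)⁻¹ * qc p) ψ)) := by
    intro χ
    rw [C]
    ring
  rw [Finset.sum_congr rfl fun χ _ => hC χ, ← Finset.mul_sum, sum_W ψ hp hψ]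
  rw [qc_neg_three hp, qc_neg_nine_half hp]
  have e7 : qc p (-1) * qc p (-1) = 1 := qc_mul_self (neg_one_ne hp)
  have hstep : (qc p (-1) / ((p : ℂ) * gaussSum (qc p) ψ)) *
      (((p : ℂ) - 1) * (-(qc p (-1) * qc p 3 + qc p (-1) * qc p 2)) * gaussSum (qc p) ψ)
      = (qc p (-1) * qc p (-1)) * (-(qc p 3 + qc p 2)) * (((p : ℂ) - 1) / p) := by
    have hp0 : (p : ℂ) ≠ 0 := p_ne_zero
    field_simp [hp0, hgq]
  rw [hstep, e7]
  ring

lemma sum_A (hp : 3 < p) (hψ : ψ ≠ 1) :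
    ∑ χ : MulChar (ZMod p) ℂ, A ψ χ = -(qc p 2) * (((p : ℂ) - 1) / p) := by
  have hsplit : ∑ χ : MulChar (ZMod p) ℂ, A ψ χ
      = (∑ χ : MulChar (ZMod p) ℂ, C ψ χ) +
        ∑ χ : MulChar (ZMod p) ℂ, (A ψ χ - C ψ χ) := by
    rw [← Finset.sum_add_distrib]
    exact Finset.sum_congr rfl fun χ _ => by ring
  have hne : (1 : MulChar (ZMod p) ℂ) ≠ qc p := fun h => (qc_ne_one hp) h.symm
  classical
  have hsupp : ∑ χ : MulChar (ZMod p) ℂ, (A ψ χ - C ψ χ)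
      = (A ψ 1 - C ψ 1) + (A ψ (qc p) - C ψ (qc p)) := by
    have hpair : ∑ χ ∈ ({1, qc p} : Finset (MulChar (ZMod p) ℂ)), (A ψ χ - C ψ χ)
        = (A ψ 1 - C ψ 1) + (A ψ (qc p) - C ψ (qc p)) := Finset.sum_pair hne
    rw [← hpair]
    symm
    apply Finset.sum_subset (Finset.subset_univ _)
    intro χ _ hχ
    simp only [Finset.mem_insert, Finset.mem_singleton] at hχ
    push_neg at hχ
    rw [A_eq_C ψ hp hψ hχ.1 hχ.2]
    ring
  have hq274 : qc p ((27 : ZMod p) / 4) = qc p 3 := by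
    rw [show ((27 : ZMod p) / 4) = 3 * ((3 * 3) * (2 * 2)⁻¹) by
      rw [div_eq_mul_inv]; norm_num; ring]
    rw [map_mul, map_mul, qc_sq_apply (three_ne hp), qc_inv_apply,
      qc_sq_apply (two_ne hp), one_mul, mul_one]
  rw [hsplit, hsupp, A_one ψ hp hψ, C_one ψ hp hψ, A_qc ψ hp hψ, C_qc ψ hp hψ,
    sum_C ψ hp hψ, hq274]
  have hp0 : (p : ℂ) ≠ 0 := p_ne_zero
  field_simp
  ring

end bigsum

end Stmt19

/-- The character-sum identity `p · H_p({1/4,3/4},{1/6,5/6};1) = (2/p)`: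
`(p/(1-p)) ∑_χ g(χ⁴)g(χ⁻¹)g(χ⁻⁶)/(g(χ²)g(χ⁻²)g(χ⁻³)) · χ(27/4)` equals the Legendre
symbol of `2` mod `p`, for every prime `p > 3`. -/
theorem stmt19 (p : ℕ) [Fact p.Prime] (hp : 3 < p)
    (ψ : AddChar (ZMod p) ℂ) (hψ : ψ ≠ 1) :
    ((p : ℂ) / (1 - (p : ℂ))) * ∑ χ : MulChar (ZMod p) ℂ,
        (gaussSum (χ ^ 4) ψ * gaussSum χ⁻¹ ψ * gaussSum ((χ ^ 6)⁻¹) ψ) /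
          (gaussSum (χ ^ 2) ψ * gaussSum ((χ ^ 2)⁻¹) ψ * gaussSum ((χ ^ 3)⁻¹) ψ) *
          χ ((27 : ZMod p) / 4) =
      (legendreSym p 2 : ℂ) := by
  have hsum := Stmt19.sum_A ψ hp hψ
  have hrw : (∑ χ : MulChar (ZMod p) ℂ,
      (gaussSum (χ ^ 4) ψ * gaussSum χ⁻¹ ψ * gaussSum ((χ ^ 6)⁻¹) ψ) /
        (gaussSum (χ ^ 2) ψ * gaussSum ((χ ^ 2)⁻¹) ψ * gaussSum ((χ ^ 3)⁻¹) ψ) *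
        χ ((27 : ZMod p) / 4)) = ∑ χ : MulChar (ZMod p) ℂ, Stmt19.A ψ χ := rfl
  rw [hrw, hsum]
  have hlegendre : (legendreSym p 2 : ℂ) = Stmt19.qc p (2 : ZMod p) := by
    rw [legendreSym, Stmt19.qc]
    push_cast
    rfl
  rw [hlegendre]
  have hp0 : (p : ℂ) ≠ 0 := Stmt19.p_ne_zero
  have hp1 : (1 : ℂ) - (p : ℂ) ≠ 0 := by
    have : (p : ℂ) ≠ 1 := by
      intro hc
      have : p = 1 := by exact_mod_cast hc
      omega
    intro hc
    exact this (by linear_combination -hc)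
  field_simp
  ring
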